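/- arXiv:1109.4648 — 2 statements merged into one kernel-verified Lean document; each statement's English description precedes it below -/
import Mathlib

section
/- Let A and B be d × d matrices over ℂ with A of rank one, and set 𝖠 = {A, B}. Then either ϱ(𝖠) = ρ(B), or there exists an integer n ≥ 0 such that ϱ(𝖠) = ρ(A·Bⁿ)^{1/(n+1)}. -/
open scoped BigOperators
set_option maxHeartbeats 1000000
set_option synthInstance.maxHeartbeats 400000

noncomputable def matOpNorm {m : Type*} [Fintype m] [DecidableEq m] (A : Matrix m m ℂ) : ℝ :=
  ‖Matrix.toEuclideanCLM (𝕜 := ℂ) A‖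

noncomputable def specRad {m : Type*} [Fintype m] [DecidableEq m] (A : Matrix m m ℂ) : ℝ :=
  sSup ((fun z : ℂ => ‖z‖) '' spectrum ℂ A)

def prodSet {m : Type*} [Fintype m] [DecidableEq m] (S : Set (Matrix m m ℂ)) (n : ℕ) :
    Set (Matrix m m ℂ) :=
  { P | ∃ f : Fin n → Matrix m m ℂ, (∀ j, f j ∈ S) ∧ P = (List.ofFn f).prod }

noncomputable def jsr {m : Type*} [Fintype m] [DecidableEq m] (S : Set (Matrix m m ℂ)) : ℝ :=
  ⨅ n : ℕ+, ⨆ P ∈ prodSet S (n : ℕ), matOpNorm P ^ (((n : ℕ) : ℝ)⁻¹)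

section Basic

variable {d : ℕ}

local notation "𝕄" => Matrix (Fin d) (Fin d) ℂ

lemma matOpNorm_nonneg (M : 𝕄) : 0 ≤ matOpNorm M := norm_nonneg _

lemma matOpNorm_mul_le (M N : 𝕄) : matOpNorm (M * N) ≤ matOpNorm M * matOpNorm N := by
  unfold matOpNorm
  rw [map_mul]
  exact norm_mul_le _ _

lemma matOpNorm_smul (c : ℂ) (M : 𝕄) : matOpNorm (c • M) = ‖c‖ * matOpNorm M := by
  unfold matOpNorm
  rw [map_smul]
  rw [norm_smul (α := ℂ) (β := EuclideanSpace ℂ (Fin d) →L[ℂ] EuclideanSpace ℂ (Fin d))]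

lemma matOpNorm_pow (M : 𝕄) (k : ℕ) :
    matOpNorm (M ^ k) = ‖(Matrix.toEuclideanCLM (𝕜 := ℂ) M) ^ k‖ := by
  unfold matOpNorm; rw [map_pow]

lemma spec_transfer (M : 𝕄) :
    spectrum ℂ M = spectrum ℂ (Matrix.toEuclideanCLM (𝕜 := ℂ) M) :=
  (AlgEquiv.spectrum_eq (Matrix.toEuclideanCLM (𝕜 := ℂ)) M).symm

end Basic

section Spec

variable {d : ℕ}

local notation "𝕄" => Matrix (Fin d) (Fin d) ℂ

lemma euclidean_nontrivial (hd : 0 < d) : Nontrivial (EuclideanSpace ℂ (Fin d)) := by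
  haveI : Nonempty (Fin d) := ⟨⟨0, hd⟩⟩
  infer_instance

lemma clm_nontrivial (hd : 0 < d) :
    Nontrivial (EuclideanSpace ℂ (Fin d) →L[ℂ] EuclideanSpace ℂ (Fin d)) := by
  haveI := euclidean_nontrivial hd
  infer_instance

lemma spectrum_nonempty (hd : 0 < d) (M : 𝕄) : (spectrum ℂ M).Nonempty := by
  haveI := clm_nontrivial hd
  rw [spec_transfer]
  exact spectrum.nonempty _

/-- the maximum of the absolute values of the spectrum is attained -/
lemma specRad_isMax (hd : 0 < d) (M : 𝕄) :
    (∃ z ∈ spectrum ℂ M, ‖z‖ = specRad M) ∧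
      ∀ z ∈ spectrum ℂ M, ‖z‖ ≤ specRad M := by
  have hne : (spectrum ℂ M).Nonempty := spectrum_nonempty hd M
  have hcpt : IsCompact (spectrum ℂ M) := by
    rw [spec_transfer]; exact spectrum.isCompact _
  have himg : IsCompact ((fun z : ℂ => ‖z‖) '' spectrum ℂ M) :=
    hcpt.image continuous_norm
  have hmem : sSup ((fun z : ℂ => ‖z‖) '' spectrum ℂ M) ∈ (fun z : ℂ => ‖z‖) '' spectrum ℂ M :=
    himg.sSup_mem (hne.image _)
  obtain ⟨z, hz, hzeq⟩ := hmem
  refine ⟨⟨z, hz, hzeq⟩, fun w hw => ?_⟩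
  exact le_csSup himg.bddAbove ⟨w, hw, rfl⟩

lemma abs_le_matOpNorm (hd : 0 < d) {M : 𝕄} {z : ℂ} (hz : z ∈ spectrum ℂ M) :
    ‖z‖ ≤ matOpNorm M := by
  haveI := euclidean_nontrivial hd
  rw [spec_transfer] at hz
  exact spectrum.norm_le_norm_of_mem hz

lemma specRad_nonneg (hd : 0 < d) (M : 𝕄) : 0 ≤ specRad M := by
  obtain ⟨⟨z, hz, hzeq⟩, -⟩ := specRad_isMax hd M
  rw [← hzeq]; positivity

lemma specRad_le_matOpNorm (hd : 0 < d) (M : 𝕄) : specRad M ≤ matOpNorm M := by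
  obtain ⟨⟨z, hz, hzeq⟩, -⟩ := specRad_isMax hd M
  rw [← hzeq]; exact abs_le_matOpNorm hd hz

lemma pow_mem_spectrum {M : 𝕄} {z : ℂ} (hz : z ∈ spectrum ℂ M) (k : ℕ) :
    z ^ k ∈ spectrum ℂ (M ^ k) := by
  have := spectrum.subset_polynomial_aeval M (Polynomial.X ^ k : Polynomial ℂ)
  have hmem : z ^ k ∈ (fun x => Polynomial.eval x ((Polynomial.X : Polynomial ℂ) ^ k)) ''
      spectrum ℂ M := ⟨z, hz, by simp⟩
  have h2 := this hmem
  simpa using h2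

lemma specRad_pow_le (hd : 0 < d) (M : 𝕄) (k : ℕ) : specRad M ^ k ≤ matOpNorm (M ^ k) := by
  obtain ⟨⟨z, hz, hzeq⟩, -⟩ := specRad_isMax hd M
  rw [← hzeq, ← norm_pow]
  exact abs_le_matOpNorm hd (pow_mem_spectrum hz k)

end Spec

section RankOne

open scoped Matrix

variable {d : ℕ}

local notation "𝕄" => Matrix (Fin d) (Fin d) ℂ

lemma rank_one_decomp {A : 𝕄} (hA : A.rank = 1) :
    ∃ u v : Fin d → ℂ, u ≠ 0 ∧ A = Matrix.vecMulVec u v := by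
  have h1 : Module.finrank ℂ (LinearMap.range A.mulVecLin) = 1 := hA
  rw [finrank_eq_one_iff'] at h1
  obtain ⟨⟨u, hu_mem⟩, hu0, hspan⟩ := h1
  have hu : u ≠ 0 := by
    intro h
    apply hu0
    exact Subtype.ext h
  choose c hc using fun w => hspan w
  refine ⟨u, fun j => c ⟨A.mulVecLin (Pi.single j 1), LinearMap.mem_range_self _ _⟩, hu, ?_⟩
  ext i j
  set w : LinearMap.range A.mulVecLin :=
    ⟨A.mulVecLin (Pi.single j 1), LinearMap.mem_range_self _ _⟩ with hw
  have := hc w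
  have h2 : (c w) • u = A.mulVecLin (Pi.single j 1) := by
    have := congrArg Subtype.val (hc w)
    simpa [hw] using this
  have h3 : (c w) * u i = A i j := by
    have := congrArg (fun f => f i) h2
    simpa [Matrix.mulVecLin_apply, Matrix.mulVec_single] using this
  rw [Matrix.vecMulVec_apply]
  rw [← h3]; ring

lemma vecMulVec_mul (u v : Fin d → ℂ) (M : 𝕄) :
    Matrix.vecMulVec u v * M = Matrix.vecMulVec u (Matrix.vecMul v M) := by
  ext i j
  simp [Matrix.mul_apply, Matrix.vecMulVec_apply, Matrix.vecMul, dotProduct,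
    Finset.mul_sum, mul_assoc]

lemma vecMulVec_mul_vecMulVec (u w x v : Fin d → ℂ) :
    Matrix.vecMulVec u w * Matrix.vecMulVec x v
      = (w ⬝ᵥ x) • Matrix.vecMulVec u v := by
  ext i j
  simp only [Matrix.mul_apply, Matrix.vecMulVec_apply, Matrix.smul_apply, dotProduct,
    smul_eq_mul, Finset.sum_mul, Finset.mul_sum]
  apply Finset.sum_congr rfl
  intro k _
  ring

lemma vecMulVec_mulVec (u w x : Fin d → ℂ) :
    Matrix.vecMulVec u w *ᵥ x = (w ⬝ᵥ x) • u := by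
  ext i
  simp only [Matrix.mulVec, Matrix.vecMulVec_apply, dotProduct, Pi.smul_apply,
    smul_eq_mul, Finset.sum_mul, Finset.mul_sum]
  apply Finset.sum_congr rfl
  intro k _
  ring

/-- the dot product is an eigenvalue of a rank one matrix -/
lemma dot_mem_spectrum (hd : 0 < d) (u w : Fin d → ℂ) (hu : u ≠ 0) :
    (w ⬝ᵥ u) ∈ spectrum ℂ (Matrix.vecMulVec u w) := by
  rw [spectrum.mem_iff]
  intro hunit
  rw [Matrix.isUnit_iff_isUnit_det, isUnit_iff_ne_zero] at hunit
  apply hunit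
  rw [← Matrix.exists_mulVec_eq_zero_iff]
  refine ⟨u, hu, ?_⟩
  rw [Matrix.sub_mulVec, vecMulVec_mulVec, Algebra.algebraMap_eq_smul_one,
    Matrix.smul_mulVec, Matrix.one_mulVec]
  simp

lemma specRad_vecMulVec (hd : 0 < d) (u w : Fin d → ℂ) (hu : u ≠ 0) :
    specRad (Matrix.vecMulVec u w) = ‖w ⬝ᵥ u‖ := by
  haveI : Nonempty (Fin d) := ⟨⟨0, hd⟩⟩
  set C : 𝕄 := Matrix.vecMulVec u w with hC
  set t : ℂ := w ⬝ᵥ u with ht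
  have hsq : C * C = t • C := vecMulVec_mul_vecMulVec u w u w
  have hspec : ∀ z ∈ spectrum ℂ C, z = 0 ∨ z = t := by
    intro z hz
    have h0 : Polynomial.aeval C ((Polynomial.X ^ 2 - Polynomial.C t * Polynomial.X :
        Polynomial ℂ)) = 0 := by
      simp only [map_sub, map_mul, map_pow, Polynomial.aeval_X, Polynomial.aeval_C]
      rw [sq, hsq]
      rw [sub_eq_zero, Algebra.algebraMap_eq_smul_one, smul_mul_assoc, one_mul]
    have := spectrum.subset_polynomial_aeval C
      (Polynomial.X ^ 2 - Polynomial.C t * Polynomial.X : Polynomial ℂ)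
      ⟨z, hz, rfl⟩
    rw [h0, spectrum.zero_eq] at this
    simp only [Set.mem_singleton_iff, Polynomial.eval_sub, Polynomial.eval_pow,
      Polynomial.eval_X, Polynomial.eval_mul, Polynomial.eval_C] at this
    have hfac : z * (z - t) = 0 := by ring_nf; ring_nf at this; linear_combination this
    rcases mul_eq_zero.1 hfac with h | h
    · exact Or.inl h
    · exact Or.inr (sub_eq_zero.1 h)
  apply le_antisymm
  · obtain ⟨⟨z, hz, hzeq⟩, -⟩ := specRad_isMax hd C
    rw [← hzeq]
    rcases hspec z hz with h | h <;> simp [h]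
  · obtain ⟨-, hub⟩ := specRad_isMax hd C
    exact hub t (dot_mem_spectrum hd u w hu)

end RankOne

section Gelfand

open scoped ENNReal NNReal

variable {d : ℕ}

local notation "𝕄" => Matrix (Fin d) (Fin d) ℂ

lemma gelfand_bound (hd : 0 < d) (M : 𝕄) {r : ℝ} (h : specRad M < r) :
    ∃ C : ℝ, 1 ≤ C ∧ ∀ m : ℕ, matOpNorm (M ^ m) ≤ C * r ^ m := by
  set T := Matrix.toEuclideanCLM (𝕜 := ℂ) M with hT
  have hr0 : 0 < r := lt_of_le_of_lt (specRad_nonneg hd M) h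
  have hsp : spectralRadius ℂ T ≤ ENNReal.ofReal (specRad M) := by
    rw [spectralRadius]
    refine iSup₂_le fun z hz => ?_
    have hz' : z ∈ spectrum ℂ M := by rw [spec_transfer]; exact hz
    have hle : ‖z‖ ≤ specRad M := (specRad_isMax hd M).2 z hz'
    rw [show ((‖z‖₊ : NNReal) : ENNReal) = ENNReal.ofReal ‖z‖ from (ofReal_norm z).symm]
    exact ENNReal.ofReal_le_ofReal hle
  have hlt : spectralRadius ℂ T < ENNReal.ofReal r :=
    lt_of_le_of_lt hsp ((ENNReal.ofReal_lt_ofReal_iff hr0).2 h)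
  have hev := (spectrum.pow_nnnorm_pow_one_div_tendsto_nhds_spectralRadius T).eventually_lt_const
    hlt
  obtain ⟨N, hN⟩ := Filter.eventually_atTop.1 hev
  set N₀ := max N 1 with hN₀
  have key : ∀ m : ℕ, N₀ ≤ m → matOpNorm (M ^ m) ≤ r ^ m := by
    intro m hm
    have hm1 : 1 ≤ m := le_trans (le_max_right N 1) hm
    have hmN : N ≤ m := le_trans (le_max_left N 1) hm
    have hmne : (m : ℝ) ≠ 0 := by positivity
    have h1 : ((‖T ^ m‖₊ : ℝ≥0∞)) ^ (1 / (m : ℝ)) < ENNReal.ofReal r := hN m hmN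
    have h2 := ENNReal.rpow_le_rpow h1.le (by positivity : (0:ℝ) ≤ (m : ℝ))
    rw [← ENNReal.rpow_mul, one_div, inv_mul_cancel₀ hmne, ENNReal.rpow_one] at h2
    have h3 : (ENNReal.ofReal r) ^ ((m : ℝ)) = ENNReal.ofReal (r ^ m) := by
      rw [ENNReal.ofReal_rpow_of_pos hr0, Real.rpow_natCast]
    rw [h3] at h2
    have h4 := ENNReal.toReal_mono (by simp) h2
    rw [ENNReal.coe_toReal, coe_nnnorm, ENNReal.toReal_ofReal (by positivity)] at h4
    rwa [matOpNorm_pow]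
  refine ⟨1 + ∑ m ∈ Finset.range N₀, matOpNorm (M ^ m) / r ^ m, ?_, ?_⟩
  · have : 0 ≤ ∑ m ∈ Finset.range N₀, matOpNorm (M ^ m) / r ^ m :=
      Finset.sum_nonneg fun i _ => div_nonneg (matOpNorm_nonneg _) (by positivity)
    linarith
  · intro m
    by_cases hm : m < N₀
    · have hsingle : matOpNorm (M ^ m) / r ^ m ≤ ∑ i ∈ Finset.range N₀, matOpNorm (M ^ i) / r ^ i :=
        Finset.single_le_sum (f := fun i => matOpNorm (M ^ i) / r ^ i)
          (fun i _ => div_nonneg (matOpNorm_nonneg _) (by positivity)) (Finset.mem_range.2 hm)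
      have heq : matOpNorm (M ^ m) = (matOpNorm (M ^ m) / r ^ m) * r ^ m := by
        field_simp
      rw [heq]
      apply mul_le_mul_of_nonneg_right _ (by positivity)
      linarith
    · push_neg at hm
      calc matOpNorm (M ^ m) ≤ r ^ m := key m hm
        _ ≤ _ := by
            apply le_mul_of_one_le_left (by positivity)
            have : 0 ≤ ∑ i ∈ Finset.range N₀, matOpNorm (M ^ i) / r ^ i :=
              Finset.sum_nonneg fun i _ => div_nonneg (matOpNorm_nonneg _) (by positivity)
            linarith

end Gelfand

section ProdSet

variable {d : ℕ}

local notation "𝕄" => Matrix (Fin d) (Fin d) ℂ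

lemma one_mem_prodSet (S : Set 𝕄) : (1 : 𝕄) ∈ prodSet S 0 :=
  ⟨Fin.elim0, fun j => j.elim0, by simp⟩

lemma mem_prodSet_one {S : Set 𝕄} {M : 𝕄} (hM : M ∈ S) : M ∈ prodSet S 1 :=
  ⟨fun _ => M, fun _ => hM, by simp⟩

lemma mul_mem_prodSet {S : Set 𝕄} {P Q : 𝕄} {a b : ℕ}
    (hP : P ∈ prodSet S a) (hQ : Q ∈ prodSet S b) : P * Q ∈ prodSet S (a + b) := by
  obtain ⟨f, hf, rfl⟩ := hP
  obtain ⟨g, hg, rfl⟩ := hQ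
  refine ⟨Fin.addCases f g, fun j => ?_, ?_⟩
  · refine Fin.addCases (fun i => ?_) (fun i => ?_) j
    · simpa using hf i
    · simpa using hg i
  · rw [List.ofFn_add, List.prod_append]
    congr 1
    · exact congrArg List.prod (congrArg List.ofFn (funext fun i => by simp [show Fin.castLE (Nat.le_add_right a b) i = Fin.castAdd b i from rfl])).symm
    · exact congrArg List.prod (congrArg List.ofFn (funext fun i => by simp)).symm

lemma prodSet_decomp {S : Set 𝕄} {P : 𝕄} {a b : ℕ} (hP : P ∈ prodSet S (a + b)) :
    ∃ Q R : 𝕄, Q ∈ prodSet S a ∧ R ∈ prodSet S b ∧ P = Q * R := by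
  obtain ⟨f, hf, rfl⟩ := hP
  refine ⟨(List.ofFn fun i => f (Fin.castAdd b i)).prod,
    (List.ofFn fun i => f (Fin.natAdd a i)).prod,
    ⟨_, fun i => hf _, rfl⟩, ⟨_, fun i => hf _, rfl⟩, ?_⟩
  rw [List.ofFn_add, List.prod_append]
  rfl

lemma pow_mem_prodSet {S : Set 𝕄} {M : 𝕄} {a : ℕ} (hM : M ∈ prodSet S a) (k : ℕ) :
    M ^ k ∈ prodSet S (k * a) := by
  induction k with
  | zero => simpa using one_mem_prodSet S
  | succ k ih =>
      have := mul_mem_prodSet ih hM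
      rw [← pow_succ] at this
      rwa [Nat.succ_mul]

lemma prodSet_pair_finite (A B : 𝕄) (n : ℕ) : (prodSet {A, B} n).Finite := by
  have hsub : prodSet {A, B} n ⊆
      Set.range (fun f : Fin n → Bool => (List.ofFn fun i => if f i then A else B).prod) := by
    rintro P ⟨f, hf, rfl⟩
    refine ⟨fun i => decide (f i = A), ?_⟩
    have hfg : (fun i => if decide (f i = A) then A else B) = f := by
      funext i
      by_cases h : f i = A
      · simp [h]
      · rcases hf i with h' | h'
        · exact absurd h' h
        · simp only [Set.mem_singleton_iff] at h'
          have hBA : ¬ (B = A) := fun hba => h (h'.trans hba)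
          rw [h', if_neg (by simpa using hBA)]
    exact congrArg (fun g => (List.ofFn g).prod) hfg
  exact (Set.finite_range _).subset hsub

lemma prodSet_pair_nonempty (A B : 𝕄) (n : ℕ) : (prodSet {A, B} n).Nonempty :=
  ⟨(List.ofFn fun _ : Fin n => B).prod, ⟨fun _ => B, fun _ => Or.inr rfl, rfl⟩⟩

lemma pow_mem_prodSet_pair (A B : 𝕄) (n : ℕ) : B ^ n ∈ prodSet {A, B} n := by
  have := pow_mem_prodSet (mem_prodSet_one (show B ∈ {A, B} from Or.inr rfl)) n
  simpa using this

end ProdSet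

section Sn

variable {d : ℕ}

local notation "𝕄" => Matrix (Fin d) (Fin d) ℂ

/-- sup of operator norms over products of length `n` -/
noncomputable def sn (A B : 𝕄) (n : ℕ) : ℝ :=
  sSup (matOpNorm '' prodSet {A, B} n)

lemma le_sn {A B : 𝕄} {P : 𝕄} {n : ℕ} (hP : P ∈ prodSet {A, B} n) :
    matOpNorm P ≤ sn A B n :=
  le_csSup (((prodSet_pair_finite A B n).image _).bddAbove) ⟨P, hP, rfl⟩

lemma sn_nonneg (A B : 𝕄) (n : ℕ) : 0 ≤ sn A B n := by
  obtain ⟨P, hP⟩ := prodSet_pair_nonempty A B n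
  exact le_trans (matOpNorm_nonneg P) (le_sn hP)

lemma sn_le {A B : 𝕄} {n : ℕ} {y : ℝ} (hy : 0 ≤ y)
    (h : ∀ P ∈ prodSet {A, B} n, matOpNorm P ≤ y) : sn A B n ≤ y := by
  apply Real.sSup_le _ hy
  rintro x ⟨P, hP, rfl⟩
  exact h P hP

lemma sn_exists_max (A B : 𝕄) (n : ℕ) :
    ∃ P ∈ prodSet {A, B} n, (∀ Q ∈ prodSet {A, B} n, matOpNorm Q ≤ matOpNorm P) ∧
      sn A B n = matOpNorm P := by
  obtain ⟨P, hP, hmax⟩ := Set.exists_max_image (prodSet {A, B} n) matOpNorm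
    (prodSet_pair_finite A B n) (prodSet_pair_nonempty A B n)
  refine ⟨P, hP, hmax, le_antisymm (sn_le (matOpNorm_nonneg P) hmax) (le_sn hP)⟩

lemma sn_add_le (A B : 𝕄) (a b : ℕ) : sn A B (a + b) ≤ sn A B a * sn A B b := by
  apply sn_le (mul_nonneg (sn_nonneg A B a) (sn_nonneg A B b))
  intro P hP
  obtain ⟨Q, R, hQ, hR, rfl⟩ := prodSet_decomp hP
  calc matOpNorm (Q * R) ≤ matOpNorm Q * matOpNorm R := matOpNorm_mul_le Q R
    _ ≤ sn A B a * sn A B b :=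
        mul_le_mul (le_sn hQ) (le_sn hR) (matOpNorm_nonneg R) (sn_nonneg A B a)

lemma sn_mul_le (A B : 𝕄) (a k : ℕ) : sn A B (k * a) ≤ sn A B a ^ k := by
  induction k with
  | zero =>
      simp only [Nat.zero_mul, pow_zero]
      apply sn_le zero_le_one
      rintro P hP
      obtain ⟨f, -, rfl⟩ := hP
      have : (List.ofFn f) = [] := by simp
      rw [this, List.prod_nil]
      unfold matOpNorm
      rw [map_one]
      calc ‖(1 : EuclideanSpace ℂ (Fin d) →L[ℂ] EuclideanSpace ℂ (Fin d))‖
          = ‖ContinuousLinearMap.id ℂ (EuclideanSpace ℂ (Fin d))‖ := by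
            rw [ContinuousLinearMap.one_def]
        _ ≤ 1 := ContinuousLinearMap.norm_id_le
  | succ k ih =>
      have h1 : sn A B ((k + 1) * a) ≤ sn A B (k * a) * sn A B a := by
        rw [Nat.succ_mul]
        exact sn_add_le A B (k * a) a
      calc sn A B ((k + 1) * a) ≤ sn A B (k * a) * sn A B a := h1
        _ ≤ sn A B a ^ k * sn A B a := mul_le_mul_of_nonneg_right ih (sn_nonneg A B a)
        _ = sn A B a ^ (k + 1) := by ring

/-- helper: a conditional iSup over a set with a maximizing element -/
lemma iSup₂_eq_of_max {α : Type*} {s : Set α} {g : α → ℝ} (hg : ∀ x, 0 ≤ g x) {x₀ : α}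
    (hx₀ : x₀ ∈ s) (hmax : ∀ x ∈ s, g x ≤ g x₀) : (⨆ x ∈ s, g x) = g x₀ := by
  have hinner : ∀ x : α, (⨆ _ : x ∈ s, g x) ≤ g x₀ := by
    intro x
    exact Real.iSup_le (fun h => hmax x h) (hg x₀)
  apply le_antisymm
  · exact Real.iSup_le hinner (hg x₀)
  · have h1 : (⨆ _ : x₀ ∈ s, g x₀) = g x₀ := ciSup_pos hx₀
    rw [← h1]
    exact le_ciSup (f := fun x => ⨆ _ : x ∈ s, g x) ⟨g x₀, by rintro y ⟨x, rfl⟩; exact hinner x⟩ x₀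

lemma jsr_term_eq (A B : 𝕄) (n : ℕ) (e : ℝ) (he : 0 ≤ e) :
    (⨆ P ∈ prodSet {A, B} n, matOpNorm P ^ e) = sn A B n ^ e := by
  obtain ⟨P₀, hP₀, hmax, heq⟩ := sn_exists_max A B n
  rw [heq]
  exact iSup₂_eq_of_max (fun x => Real.rpow_nonneg (matOpNorm_nonneg x) e) hP₀
    (fun x hx => Real.rpow_le_rpow (matOpNorm_nonneg x) (hmax x hx) he)

lemma jsr_eq (A B : 𝕄) :
    jsr {A, B} = ⨅ n : ℕ+, sn A B (n : ℕ) ^ (((n : ℕ) : ℝ)⁻¹) := by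
  unfold jsr
  congr 1
  funext n
  exact jsr_term_eq A B (n : ℕ) _ (by positivity)

lemma jsr_le_term (A B : 𝕄) (n : ℕ+) : jsr {A, B} ≤ sn A B (n : ℕ) ^ (((n : ℕ) : ℝ)⁻¹) := by
  rw [jsr_eq]
  apply ciInf_le ⟨0, ?_⟩ n
  rintro y ⟨m, rfl⟩
  exact Real.rpow_nonneg (sn_nonneg A B _) _

lemma le_jsr {A B : 𝕄} {r : ℝ} (hr : 0 ≤ r) (h : ∀ n : ℕ+, r ^ (n : ℕ) ≤ sn A B (n : ℕ)) :
    r ≤ jsr {A, B} := by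
  rw [jsr_eq]
  apply le_ciInf
  intro n
  have hn : (n : ℕ) ≠ 0 := n.ne_zero
  calc r = (r ^ (n : ℕ)) ^ (((n : ℕ) : ℝ)⁻¹) := (Real.pow_rpow_inv_natCast hr hn).symm
    _ ≤ sn A B (n : ℕ) ^ (((n : ℕ) : ℝ)⁻¹) :=
        Real.rpow_le_rpow (by positivity) (h n) (by positivity)

end Sn

section Words

open scoped Matrix

variable {d : ℕ}

local notation "𝕄" => Matrix (Fin d) (Fin d) ℂ

lemma key_alg (u v : Fin d → ℂ) (B : 𝕄) (a : ℕ) :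
    Matrix.vecMulVec u v * B ^ a * Matrix.vecMulVec u v
      = ((Matrix.vecMul v (B ^ a)) ⬝ᵥ u) • Matrix.vecMulVec u v := by
  rw [vecMulVec_mul, vecMulVec_mul_vecMulVec]

lemma word_form {A B : 𝕄} {u v : Fin d → ℂ} (hAuv : A = Matrix.vecMulVec u v) {r : ℝ}
    (hr : 0 ≤ r) (ht : ∀ k : ℕ, ‖(Matrix.vecMul v (B ^ k)) ⬝ᵥ u‖ ≤ r ^ (k + 1)) :
    ∀ n : ℕ, ∀ P ∈ prodSet {A, B} n, P = B ^ n ∨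
      ∃ (c : ℂ) (a b : ℕ), a + 1 + b ≤ n ∧ ‖c‖ ≤ r ^ (n - (a + 1 + b)) ∧
        P = c • (B ^ a * A * B ^ b) := by
  intro n
  induction n with
  | zero =>
      rintro P ⟨f, -, rfl⟩
      left
      simp
  | succ n ih =>
      rintro P ⟨f, hf, rfl⟩
      have hrest : (List.ofFn fun i : Fin n => f i.succ).prod ∈ prodSet {A, B} n :=
        ⟨fun i => f i.succ, fun i => hf i.succ, rfl⟩
      rw [List.ofFn_succ, List.prod_cons]
      set R := (List.ofFn fun i : Fin n => f i.succ).prod with hR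
      rcases ih R hrest with hcase | ⟨c, a, b, hab, hc, hcform⟩
      · -- R = B ^ n
        rcases hf 0 with h0 | h0
        · -- f 0 = A
          right
          refine ⟨1, 0, n, by omega, ?_, ?_⟩
          · have h1 : n + 1 - (0 + 1 + n) = 0 := by omega
            rw [norm_one, h1, pow_zero]
          · rw [h0, hcase]
            simp
        · -- f 0 = B
          left
          rw [Set.mem_singleton_iff] at h0
          rw [h0, hcase, ← pow_succ']
      · rcases hf 0 with h0 | h0
        · -- f 0 = A : collapse
          right
          have hτ : A * B ^ a * A = ((Matrix.vecMul v (B ^ a)) ⬝ᵥ u) • A := by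
            rw [hAuv]; exact key_alg u v B a
          refine ⟨c * ((Matrix.vecMul v (B ^ a)) ⬝ᵥ u), 0, b, by omega, ?_, ?_⟩
          · rw [norm_mul]
            calc ‖c‖ * ‖(Matrix.vecMul v (B ^ a)) ⬝ᵥ u‖
                ≤ r ^ (n - (a + 1 + b)) * r ^ (a + 1) :=
                  mul_le_mul hc (ht a) (norm_nonneg _) (by positivity)
              _ = r ^ ((n - (a + 1 + b)) + (a + 1)) := (pow_add r _ _).symm
              _ = r ^ (n + 1 - (0 + 1 + b)) := by congr 1; omega
          · rw [h0, hcform, mul_smul_comm]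
            have hkey : A * (B ^ a * A * B ^ b)
                = ((Matrix.vecMul v (B ^ a)) ⬝ᵥ u) • (B ^ 0 * A * B ^ b) := by
              calc A * (B ^ a * A * B ^ b) = (A * B ^ a * A) * B ^ b := by
                    rw [← mul_assoc, ← mul_assoc]
                _ = _ := by rw [hτ, smul_mul_assoc, pow_zero, one_mul]
            rw [hkey, smul_smul]
        · -- f 0 = B
          right
          rw [Set.mem_singleton_iff] at h0
          refine ⟨c, a + 1, b, by omega, ?_, ?_⟩
          · calc ‖c‖ ≤ r ^ (n - (a + 1 + b)) := hc
              _ = r ^ (n + 1 - (a + 1 + 1 + b)) := by congr 1; omega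
          · rw [h0, hcform, mul_smul_comm]
            congr 1
            rw [← mul_assoc, ← mul_assoc, ← pow_succ']

end Words

section Upper

open scoped Matrix

variable {d : ℕ}

local notation "𝕄" => Matrix (Fin d) (Fin d) ℂ

lemma sn_bound {A B : 𝕄} {u v : Fin d → ℂ} (hAuv : A = Matrix.vecMulVec u v) {r r'' C : ℝ}
    (hr : 0 ≤ r) (hrr : r ≤ r'') (hr'' : 0 < r'') (hC1 : 1 ≤ C)
    (hCm : ∀ m : ℕ, matOpNorm (B ^ m) ≤ C * r'' ^ m)
    (ht : ∀ k : ℕ, ‖(Matrix.vecMul v (B ^ k)) ⬝ᵥ u‖ ≤ r ^ (k + 1)) (n : ℕ) :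
    sn A B n ≤ (C + C ^ 2 * (matOpNorm A + 1) / r'') * r'' ^ n := by
  set K := C + C ^ 2 * (matOpNorm A + 1) / r'' with hK
  clear_value K
  have hνA : 0 ≤ matOpNorm A := matOpNorm_nonneg A
  have hKC : C ≤ K := by
    have : 0 ≤ C ^ 2 * (matOpNorm A + 1) / r'' := by positivity
    linarith
  have hK0 : 0 < K := lt_of_lt_of_le (lt_of_lt_of_le one_pos hC1) hKC
  apply sn_le (by positivity)
  intro P hP
  rcases word_form hAuv hr ht n P hP with hcase | ⟨c, a, b, hab, hc, hform⟩
  · rw [hcase]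
    calc matOpNorm (B ^ n) ≤ C * r'' ^ n := hCm n
      _ ≤ K * r'' ^ n := mul_le_mul_of_nonneg_right hKC (by positivity)
  · rw [hform, matOpNorm_smul]
    have h2 : matOpNorm (B ^ a * A * B ^ b)
        ≤ (C * r'' ^ a) * matOpNorm A * (C * r'' ^ b) := by
      calc matOpNorm (B ^ a * A * B ^ b)
          ≤ matOpNorm (B ^ a * A) * matOpNorm (B ^ b) := matOpNorm_mul_le _ _
        _ ≤ (matOpNorm (B ^ a) * matOpNorm A) * matOpNorm (B ^ b) :=
            mul_le_mul_of_nonneg_right (matOpNorm_mul_le _ _) (matOpNorm_nonneg _)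
        _ ≤ (C * r'' ^ a * matOpNorm A) * (C * r'' ^ b) := by
            apply mul_le_mul _ (hCm b) (matOpNorm_nonneg _) (by positivity)
            exact mul_le_mul_of_nonneg_right (hCm a) hνA
    have hcbound : ‖c‖ ≤ r'' ^ (n - (a + 1 + b)) :=
      le_trans hc (pow_le_pow_left₀ hr hrr _)
    calc ‖c‖ * matOpNorm (B ^ a * A * B ^ b)
        ≤ r'' ^ (n - (a + 1 + b)) * ((C * r'' ^ a) * matOpNorm A * (C * r'' ^ b)) :=
          mul_le_mul hcbound h2 (matOpNorm_nonneg _) (by positivity)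
      _ = C ^ 2 * matOpNorm A * (r'' ^ (n - (a + 1 + b)) * r'' ^ a * r'' ^ b) := by ring
      _ = C ^ 2 * matOpNorm A * r'' ^ (n - 1) := by
          rw [← pow_add, ← pow_add]
          congr 2
          omega
      _ ≤ C ^ 2 * (matOpNorm A + 1) * r'' ^ (n - 1) := by
          apply mul_le_mul_of_nonneg_right _ (by positivity)
          nlinarith
      _ = (C ^ 2 * (matOpNorm A + 1) / r'') * (r'' ^ (n - 1) * r'') := by
          field_simp
      _ = (C ^ 2 * (matOpNorm A + 1) / r'') * r'' ^ n := by
          congr 1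
          rw [← pow_succ]
          congr 1
          omega
      _ ≤ K * r'' ^ n := by
          apply mul_le_mul_of_nonneg_right _ (by positivity)
          rw [hK]
          linarith [le_trans zero_le_one hC1]

lemma jsr_upper (hd : 0 < d) {A B : 𝕄} {u v : Fin d → ℂ} (hAuv : A = Matrix.vecMulVec u v)
    {r : ℝ} (hr : 0 ≤ r) (hB : specRad B ≤ r)
    (ht : ∀ k : ℕ, ‖(Matrix.vecMul v (B ^ k)) ⬝ᵥ u‖ ≤ r ^ (k + 1)) :
    jsr {A, B} ≤ r := by
  have main : ∀ δ : ℝ, 0 < δ → jsr {A, B} ≤ r + δ := by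
    intro δ hδ
    set r'' := r + δ / 2 with hr''def
    clear_value r''
    have hr''0 : 0 < r'' := by rw [hr''def]; positivity
    obtain ⟨C, hC1, hCm⟩ := gelfand_bound (r := r'') hd B (lt_of_le_of_lt hB (by linarith))
    have hCm' : ∀ m : ℕ, matOpNorm (B ^ m) ≤ C * r'' ^ m := hCm
    set K := C + C ^ 2 * (matOpNorm A + 1) / r'' with hKdef
    clear_value K
    have hsn := sn_bound hAuv hr (by linarith) hr''0 hC1 hCm' ht
    have hK1 : 1 ≤ K := by
      have : 0 ≤ C ^ 2 * (matOpNorm A + 1) / r'' := by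
        have := matOpNorm_nonneg A
        positivity
      linarith
    set q := (r + δ) / r'' with hq
    clear_value q
    have hq1 : 1 < q := by
      rw [hq, lt_div_iff₀ hr''0]
      linarith
    obtain ⟨n₀, hn₀⟩ := pow_unbounded_of_one_lt K hq1
    set n := max n₀ 1 with hn
    clear_value n
    have hn1 : 1 ≤ n := by rw [hn]; exact le_max_right _ _
    have hKq : K < q ^ n := by
      rw [hn]
      exact lt_of_lt_of_le hn₀ (pow_le_pow_right₀ (le_of_lt hq1) (le_max_left _ _))
    have hnne : (n : ℕ) ≠ 0 := by omega
    have step1 : jsr {A, B} ≤ sn A B n ^ ((n : ℝ)⁻¹) := by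
      have := jsr_le_term A B ⟨n, by omega⟩
      simpa using this
    have step2 : sn A B n ^ ((n : ℝ)⁻¹) ≤ (K * r'' ^ n) ^ ((n : ℝ)⁻¹) :=
      Real.rpow_le_rpow (sn_nonneg A B n) (by rw [hKdef]; exact hsn n) (by positivity)
    have step3 : (K * r'' ^ n) ^ ((n : ℝ)⁻¹) = K ^ ((n : ℝ)⁻¹) * r'' := by
      rw [Real.mul_rpow (by linarith) (by positivity),
        Real.pow_rpow_inv_natCast hr''0.le hnne]
    have step4 : K ^ ((n : ℝ)⁻¹) ≤ q := by
      have h1 : K ^ ((n : ℝ)⁻¹) ≤ (q ^ n) ^ ((n : ℝ)⁻¹) :=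
        Real.rpow_le_rpow (by linarith) hKq.le (by positivity)
      rwa [Real.pow_rpow_inv_natCast (by linarith : (0:ℝ) ≤ q) hnne] at h1
    have step5 : q * r'' = r + δ := by
      rw [hq]
      field_simp
    calc jsr {A, B} ≤ sn A B n ^ ((n : ℝ)⁻¹) := step1
      _ ≤ (K * r'' ^ n) ^ ((n : ℝ)⁻¹) := step2
      _ = K ^ ((n : ℝ)⁻¹) * r'' := step3
      _ ≤ q * r'' := mul_le_mul_of_nonneg_right step4 hr''0.le
      _ = r + δ := step5
  by_contra hcon
  push_neg at hcon
  have := main ((jsr {A, B} - r) / 2) (by linarith)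
  linarith

end Upper

section Lower

open scoped Matrix

variable {d : ℕ}

local notation "𝕄" => Matrix (Fin d) (Fin d) ℂ

lemma lower_B (hd : 0 < d) (A B : 𝕄) : specRad B ≤ jsr {A, B} := by
  apply le_jsr (specRad_nonneg hd B)
  intro n
  calc specRad B ^ (n : ℕ) ≤ matOpNorm (B ^ (n : ℕ)) := specRad_pow_le hd B n
    _ ≤ sn A B (n : ℕ) := le_sn (pow_mem_prodSet_pair A B n)

lemma rpow_pow_comm {x : ℝ} (hx : 0 ≤ x) (e : ℝ) (n : ℕ) :
    (x ^ e) ^ n = (x ^ n) ^ e := by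
  rw [← Real.rpow_natCast (x ^ e) n, ← Real.rpow_mul hx, mul_comm,
    Real.rpow_mul hx, Real.rpow_natCast]

lemma lower_t (hd : 0 < d) (A B : 𝕄) (k : ℕ) (hmem : A * B ^ k ∈ prodSet {A, B} (k + 1)) :
    specRad (A * B ^ k) ^ (((k : ℝ) + 1))⁻¹ ≤ jsr {A, B} := by
  set x := specRad (A * B ^ k) with hx
  have hx0 : 0 ≤ x := specRad_nonneg hd _
  have hkne : (k + 1 : ℕ) ≠ 0 := Nat.succ_ne_zero k
  have hcast : ((k : ℝ) + 1) = ((k + 1 : ℕ) : ℝ) := by push_cast; ring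
  apply le_jsr (Real.rpow_nonneg hx0 _)
  intro n
  have h1 : x ^ (n : ℕ) ≤ matOpNorm ((A * B ^ k) ^ (n : ℕ)) := specRad_pow_le hd _ _
  have h2 : (A * B ^ k) ^ (n : ℕ) ∈ prodSet {A, B} ((n : ℕ) * (k + 1)) :=
    pow_mem_prodSet hmem (n : ℕ)
  have h3 : matOpNorm ((A * B ^ k) ^ (n : ℕ)) ≤ sn A B ((n : ℕ) * (k + 1)) := le_sn h2
  have h4 : sn A B ((n : ℕ) * (k + 1)) ≤ sn A B (n : ℕ) ^ (k + 1) := by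
    rw [Nat.mul_comm]
    exact sn_mul_le A B (n : ℕ) (k + 1)
  have key : x ^ (n : ℕ) ≤ sn A B (n : ℕ) ^ (k + 1) := by linarith
  have hs0 : 0 ≤ sn A B (n : ℕ) := sn_nonneg A B _
  rw [hcast, rpow_pow_comm hx0]
  calc (x ^ (n : ℕ)) ^ (((k + 1 : ℕ) : ℝ))⁻¹
      ≤ (sn A B (n : ℕ) ^ (k + 1)) ^ (((k + 1 : ℕ) : ℝ))⁻¹ :=
        Real.rpow_le_rpow (by positivity) key (by positivity)
    _ = sn A B (n : ℕ) := Real.pow_rpow_inv_natCast hs0 hkne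

end Lower

open scoped Matrix

theorem stmt3 {d : ℕ} (A B : Matrix (Fin d) (Fin d) ℂ) (hA : A.rank = 1) :
    jsr {A, B} = specRad B ∨
      ∃ n : ℕ, jsr {A, B} = specRad (A * B ^ n) ^ (((n : ℝ) + 1)⁻¹) := by
  have hd : 0 < d := by
    by_contra h
    push_neg at h
    have hd0 : d = 0 := by omega
    subst hd0
    have := A.rank_le_card_width
    rw [hA] at this
    simp at this
  obtain ⟨u, v, hu, hAuv⟩ := rank_one_decomp hA
  have hABk : ∀ k : ℕ, A * B ^ k = Matrix.vecMulVec u (Matrix.vecMul v (B ^ k)) := fun k => by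
    rw [hAuv, vecMulVec_mul]
  have hspecABk : ∀ k : ℕ, specRad (A * B ^ k) = ‖(Matrix.vecMul v (B ^ k)) ⬝ᵥ u‖ :=
    fun k => by rw [hABk k]; exact specRad_vecMulVec hd u _ hu
  set t : ℕ → ℝ := fun k => ‖(Matrix.vecMul v (B ^ k)) ⬝ᵥ u‖ ^ (((k : ℝ) + 1))⁻¹
    with htdef
  have ht0 : ∀ k, 0 ≤ t k := fun k => Real.rpow_nonneg (norm_nonneg _) _
  have hcast : ∀ k : ℕ, ((k : ℝ) + 1) = ((k + 1 : ℕ) : ℝ) := fun k => by push_cast; ring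
  have htpow : ∀ k : ℕ, t k ^ (k + 1) = ‖(Matrix.vecMul v (B ^ k)) ⬝ᵥ u‖ := by
    intro k
    rw [htdef]
    simp only []
    rw [hcast k]
    exact Real.rpow_inv_natCast_pow (norm_nonneg _) (Nat.succ_ne_zero k)
  have hABmem : ∀ k : ℕ, A * B ^ k ∈ prodSet {A, B} (k + 1) := by
    intro k
    have h1 : A ∈ ({A, B} : Set (Matrix (Fin d) (Fin d) ℂ)) := Or.inl rfl
    have := mul_mem_prodSet (mem_prodSet_one h1) (pow_mem_prodSet_pair A B k)
    rwa [Nat.add_comm] at this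
  have hlowt : ∀ k : ℕ, t k ≤ jsr {A, B} := by
    intro k
    have := lower_t hd A B k (hABmem k)
    rwa [hspecABk k] at this
  have hlowB : specRad B ≤ jsr {A, B} := lower_B hd A B
  by_cases hcase : ∀ k, t k ≤ specRad B
  · left
    apply le_antisymm _ hlowB
    apply jsr_upper hd hAuv (specRad_nonneg hd B) le_rfl
    intro k
    rw [← htpow k]
    exact pow_le_pow_left₀ (ht0 k) (hcase k) (k + 1)
  · push_neg at hcase
    obtain ⟨k₀, hk₀⟩ := hcase
    have ht0pos : 0 < t k₀ := lt_of_le_of_lt (specRad_nonneg hd B) hk₀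
    set ρ : ℝ := (specRad B + t k₀) / 2 with hρdef
    clear_value ρ
    have hρB : specRad B < ρ := by rw [hρdef]; linarith
    have hρt : ρ < t k₀ := by rw [hρdef]; linarith
    have hρ0 : 0 < ρ := lt_of_le_of_lt (specRad_nonneg hd B) hρB
    obtain ⟨C, hC1, hCm⟩ := gelfand_bound hd B hρB
    set D := max (matOpNorm A * C) 1 with hDdef
    have hD1 : 1 ≤ D := le_max_right _ _
    have hkbound : ∀ k : ℕ, ‖(Matrix.vecMul v (B ^ k)) ⬝ᵥ u‖ ≤ D * ρ ^ k := by
      intro k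
      calc ‖(Matrix.vecMul v (B ^ k)) ⬝ᵥ u‖ = specRad (A * B ^ k) :=
            (hspecABk k).symm
        _ ≤ matOpNorm (A * B ^ k) := specRad_le_matOpNorm hd _
        _ ≤ matOpNorm A * matOpNorm (B ^ k) := matOpNorm_mul_le _ _
        _ ≤ matOpNorm A * (C * ρ ^ k) :=
            mul_le_mul_of_nonneg_left (hCm k) (matOpNorm_nonneg A)
        _ = (matOpNorm A * C) * ρ ^ k := by ring
        _ ≤ D * ρ ^ k := mul_le_mul_of_nonneg_right (le_max_left _ _) (by positivity)
    obtain ⟨N, hN⟩ := pow_unbounded_of_one_lt (D / t k₀) ((one_lt_div hρ0).2 hρt)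
    have hlarge : ∀ k : ℕ, N ≤ k → t k < t k₀ := by
      intro k hk
      have hq1 : 1 ≤ t k₀ / ρ := le_of_lt ((one_lt_div hρ0).2 hρt)
      have hDlt : D < t k₀ * (t k₀ / ρ) ^ k := by
        have h1 : D / t k₀ < (t k₀ / ρ) ^ k :=
          lt_of_lt_of_le hN (pow_le_pow_right₀ hq1 hk)
        rw [div_lt_iff₀ ht0pos] at h1
        calc D < (t k₀ / ρ) ^ k * t k₀ := h1
          _ = t k₀ * (t k₀ / ρ) ^ k := by ring
      have h1 : D * ρ ^ k < t k₀ ^ (k + 1) := by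
        have h2 := mul_lt_mul_of_pos_right hDlt (by positivity : (0:ℝ) < ρ ^ k)
        calc D * ρ ^ k < t k₀ * (t k₀ / ρ) ^ k * ρ ^ k := h2
          _ = t k₀ * ((t k₀ / ρ) * ρ) ^ k := by rw [mul_pow]; ring
          _ = t k₀ * t k₀ ^ k := by rw [div_mul_cancel₀ _ (ne_of_gt hρ0)]
          _ = t k₀ ^ (k + 1) := by ring
      have h2 : ‖(Matrix.vecMul v (B ^ k)) ⬝ᵥ u‖ < t k₀ ^ (k + 1) :=
        lt_of_le_of_lt (hkbound k) h1
      have h3 : t k < (t k₀ ^ (k + 1)) ^ (((k : ℝ) + 1))⁻¹ := by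
        rw [htdef]
        exact Real.rpow_lt_rpow (norm_nonneg _) h2 (by positivity)
      rwa [hcast k, Real.pow_rpow_inv_natCast ht0pos.le (Nat.succ_ne_zero k)] at h3
    obtain ⟨ks, hksF, hksmax⟩ := Finset.exists_max_image (Finset.range (max N k₀ + 1)) t
      ⟨k₀, Finset.mem_range.2 (by omega)⟩
    have hk₀mem : k₀ ∈ Finset.range (max N k₀ + 1) := Finset.mem_range.2 (by omega)
    have hglobal : ∀ k, t k ≤ t ks := by
      intro k
      by_cases hk : k ∈ Finset.range (max N k₀ + 1)
      · exact hksmax k hk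
      · have hgeN : N ≤ k := by
          rw [Finset.mem_range] at hk
          omega
        exact le_trans (le_of_lt (hlarge k hgeN)) (hksmax k₀ hk₀mem)
    have hksB : specRad B ≤ t ks := le_of_lt (lt_of_lt_of_le hk₀ (hksmax k₀ hk₀mem))
    right
    refine ⟨ks, ?_⟩
    have heq : specRad (A * B ^ ks) ^ (((ks : ℝ) + 1))⁻¹ = t ks := by rw [hspecABk ks]
    rw [heq]
    apply le_antisymm _ (hlowt ks)
    apply jsr_upper hd hAuv (ht0 ks) hksB
    intro k
    rw [← htpow k]
    exact pow_le_pow_left₀ (ht0 k) (hglobal k) (k + 1)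
end

section
/- Let ‖·‖ be the operator norm on d × d complex matrices induced by some norm on ℂ^d. Let A be a d × d complex matrix of rank one with ‖A‖ ≤ 1, let R be a d × d complex matrix, and set Q = A·R. If ‖Q‖ ≤ 1 and ‖Q·A‖ = 1, then ρ(Q) = 1; indeed there exists a nonzero vector v ∈ ℂ^d and a complex number λ with |λ| = 1 such that Q·v = λ·v. -/
open scoped BigOperators

/-- `ν` is a norm on `ℂ^d`. -/
structure IsNorm {d : ℕ} (ν : (Fin d → ℂ) → ℝ) : Prop where
  eq_zero_iff : ∀ x, ν x = 0 ↔ x = 0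
  smul : ∀ (a : ℂ) (x : Fin d → ℂ), ν (a • x) = ‖a‖ * ν x
  triangle : ∀ x y, ν (x + y) ≤ ν x + ν y

/-- The operator norm on `d × d` matrices induced by a norm `ν` on `ℂ^d`:
the supremum of `ν (M v)` over unit vectors `v`. -/
noncomputable def opNormWrt {d : ℕ} (ν : (Fin d → ℂ) → ℝ)
    (M : Matrix (Fin d) (Fin d) ℂ) : ℝ :=
  sSup ((fun v => ν (M.mulVec v)) '' {v | ν v = 1})

section Aux

variable {d : ℕ} {ν : (Fin d → ℂ) → ℝ}

lemma nu_zero (hν : IsNorm ν) : ν 0 = 0 := by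
  have h := hν.smul 0 0
  simpa using h

lemma nu_nonneg (hν : IsNorm ν) (x : Fin d → ℂ) : 0 ≤ ν x := by
  have h := hν.triangle x (-x)
  have h2 : ν (-x) = ν x := by
    have := hν.smul (-1) x
    simpa using this
  have h3 : ν (x + -x) = 0 := by
    rw [add_neg_cancel, nu_zero hν]
  rw [h3, h2] at h
  linarith

lemma nu_pos (hν : IsNorm ν) {x : Fin d → ℂ} (hx : x ≠ 0) : 0 < ν x :=
  lt_of_le_of_ne (nu_nonneg hν x) (fun h => hx ((hν.eq_zero_iff x).mp h.symm))

lemma nu_sum_le (hν : IsNorm ν) {ι : Type*} (s : Finset ι) (f : ι → (Fin d → ℂ)) :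
    ν (∑ i ∈ s, f i) ≤ ∑ i ∈ s, ν (f i) :=
  Finset.le_sum_of_subadditive ν (nu_zero hν).le hν.triangle s f

lemma nu_mulVec_le_sum (hν : IsNorm ν) (M : Matrix (Fin d) (Fin d) ℂ) (v : Fin d → ℂ) :
    ν (M.mulVec v) ≤ ‖v‖ * ∑ j, ν (fun i => M i j) := by
  have hrep : M.mulVec v = ∑ j, v j • (fun i => M i j) := by
    funext i
    simp [Matrix.mulVec, dotProduct, Finset.sum_apply, mul_comm]
  calc ν (M.mulVec v) = ν (∑ j, v j • (fun i => M i j)) := by rw [hrep]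
    _ ≤ ∑ j, ν (v j • (fun i => M i j)) := nu_sum_le hν _ _
    _ = ∑ j, ‖v j‖ * ν (fun i => M i j) := by
        refine Finset.sum_congr rfl fun j _ => hν.smul _ _
    _ ≤ ∑ j, ‖v‖ * ν (fun i => M i j) := by
        refine Finset.sum_le_sum fun j _ => ?_
        refine mul_le_mul_of_nonneg_right ?_ (nu_nonneg hν _)
        simpa using norm_le_pi_norm v j
    _ = ‖v‖ * ∑ j, ν (fun i => M i j) := by rw [Finset.mul_sum]

lemma nu_continuous (hν : IsNorm ν) : Continuous ν := by
  set K : ℝ := ∑ j, ν (fun i => (1 : Matrix (Fin d) (Fin d) ℂ) i j) with hK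
  have hK0 : 0 ≤ K := Finset.sum_nonneg fun j _ => nu_nonneg hν _
  have hle : ∀ x : Fin d → ℂ, ν x ≤ ‖x‖ * K := by
    intro x
    have := nu_mulVec_le_sum hν 1 x
    rwa [Matrix.one_mulVec] at this
  have hneg : ∀ x : Fin d → ℂ, ν (-x) = ν x := by
    intro x
    have := hν.smul (-1) x
    simpa using this
  refine LipschitzWith.continuous (K := K.toNNReal) (LipschitzWith.of_dist_le_mul ?_)
  intro x y
  rw [Real.dist_eq, dist_eq_norm, Real.coe_toNNReal K hK0]
  have h1 : ν x - ν y ≤ ν (x - y) := by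
    have h := hν.triangle y (x - y)
    simp only [add_sub_cancel] at h
    linarith
  have h2 : ν y - ν x ≤ ν (x - y) := by
    have := hν.triangle x (y - x)
    have h' : ν (y - x) = ν (x - y) := by
      rw [show y - x = -(x - y) by ring, hneg]
    simp [h'] at this
    linarith
  have h3 : |ν x - ν y| ≤ ν (x - y) := abs_sub_le_iff.mpr ⟨h1, h2⟩
  calc |ν x - ν y| ≤ ν (x - y) := h3
    _ ≤ ‖x - y‖ * K := hle _
    _ = K * ‖x - y‖ := mul_comm _ _

lemma norm_le_nu (hν : IsNorm ν) : ∃ m : ℝ, 0 < m ∧ ∀ v : Fin d → ℂ, m * ‖v‖ ≤ ν v := by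
  by_cases hd : ∃ v : Fin d → ℂ, ‖v‖ = 1
  · obtain ⟨v₀, hv₀⟩ := hd
    have hcs : IsCompact (Metric.sphere (0 : Fin d → ℂ) 1) := isCompact_sphere 0 1
    obtain ⟨u, hu, humin⟩ := hcs.exists_isMinOn
      ⟨v₀, by simpa [mem_sphere_zero_iff_norm] using hv₀⟩ (nu_continuous hν).continuousOn
    have hu1 : ‖u‖ = 1 := by simpa [mem_sphere_zero_iff_norm] using hu
    have hune : u ≠ 0 := by
      intro h; rw [h] at hu1; simp at hu1
    refine ⟨ν u, nu_pos hν hune, fun v => ?_⟩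
    by_cases hv : v = 0
    · simp [hv, nu_zero hν]
    · have hnv : 0 < ‖v‖ := norm_pos_iff.mpr hv
      set w : Fin d → ℂ := ((‖v‖ : ℂ))⁻¹ • v with hw
      have habs : ‖((‖v‖ : ℂ))⁻¹‖ = ‖v‖⁻¹ := by
        rw [norm_inv, Complex.norm_real, norm_norm]
      have hw1 : ‖w‖ = 1 := by
        rw [hw, norm_smul]
        rw [habs]
        exact inv_mul_cancel₀ hnv.ne'
      have hmem : w ∈ Metric.sphere (0 : Fin d → ℂ) 1 := by
        simpa [mem_sphere_zero_iff_norm] using hw1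
      have hmin : ν u ≤ ν w := humin hmem
      have hνw : ν w = ‖v‖⁻¹ * ν v := by rw [hw, hν.smul, habs]
      rw [hνw, le_inv_mul_iff₀ hnv] at hmin
      linarith [hmin, mul_comm (ν u) ‖v‖]
  · refine ⟨1, one_pos, fun v => ?_⟩
    by_cases hv : v = 0
    · simp [hv, nu_zero hν]
    · exact absurd ⟨‖v‖⁻¹ • v, by
        rw [norm_smul, norm_inv, norm_norm]
        exact inv_mul_cancel₀ (norm_pos_iff.mpr hv).ne'⟩ hd

lemma bddAbove_nu_image (hν : IsNorm ν) (M : Matrix (Fin d) (Fin d) ℂ) :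
    BddAbove ((fun v => ν (M.mulVec v)) '' {v | ν v = 1}) := by
  obtain ⟨m, hm, hmle⟩ := norm_le_nu hν
  refine ⟨m⁻¹ * ∑ j, ν (fun i => M i j), ?_⟩
  rintro r ⟨v, hv, rfl⟩
  have hv1 : ν v = 1 := hv
  have h1 := nu_mulVec_le_sum hν M v
  have h2 : ‖v‖ ≤ m⁻¹ := by
    have := hmle v
    rw [hv1] at this
    rw [show m⁻¹ = m⁻¹ * 1 by ring, le_inv_mul_iff₀ hm]
    exact this
  calc ν (M.mulVec v) ≤ ‖v‖ * ∑ j, ν (fun i => M i j) := h1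
    _ ≤ m⁻¹ * ∑ j, ν (fun i => M i j) :=
        mul_le_mul_of_nonneg_right h2 (Finset.sum_nonneg fun j _ => nu_nonneg hν _)

lemma nu_le_opNorm (hν : IsNorm ν) (M : Matrix (Fin d) (Fin d) ℂ) {v : Fin d → ℂ}
    (hv : ν v = 1) : ν (M.mulVec v) ≤ opNormWrt ν M :=
  le_csSup (bddAbove_nu_image hν M) ⟨v, hv, rfl⟩

lemma eig_abs_le (hν : IsNorm ν) {Q : Matrix (Fin d) (Fin d) ℂ}
    (hQ : opNormWrt ν Q ≤ 1) {w : Fin d → ℂ} {μ : ℂ} (hw : w ≠ 0)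
    (he : Q.mulVec w = μ • w) : ‖μ‖ ≤ 1 := by
  have hνw : 0 < ν w := nu_pos hν hw
  set u : Fin d → ℂ := ((ν w : ℂ))⁻¹ • w with hu
  have habs : ‖((ν w : ℂ))⁻¹‖ = (ν w)⁻¹ := by
    rw [norm_inv, Complex.norm_real, Real.norm_eq_abs, abs_of_pos hνw]
  have hu1 : ν u = 1 := by
    rw [hu, hν.smul, habs]
    exact inv_mul_cancel₀ hνw.ne'
  have hQu : Q.mulVec u = μ • u := by
    rw [hu, Matrix.mulVec_smul, he, smul_comm]
  have hle : ν (Q.mulVec u) ≤ opNormWrt ν Q := nu_le_opNorm hν Q hu1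
  rw [hQu, hν.smul, hu1, mul_one] at hle
  linarith

lemma mem_spectrum_iff_eig {Q : Matrix (Fin d) (Fin d) ℂ} {μ : ℂ} :
    μ ∈ spectrum ℂ Q ↔ ∃ w : Fin d → ℂ, w ≠ 0 ∧ Q.mulVec w = μ • w := by
  have hsp : spectrum ℂ Q = spectrum ℂ (Matrix.toLinAlgEquiv' Q) :=
    (AlgEquiv.spectrum_eq (Matrix.toLinAlgEquiv') Q).symm
  rw [hsp, ← Module.End.hasEigenvalue_iff_mem_spectrum]
  constructor
  · intro h
    obtain ⟨w, hw⟩ := h.exists_hasEigenvector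
    refine ⟨w, hw.2, ?_⟩
    have := Module.End.mem_eigenspace_iff.mp hw.1
    simpa [Matrix.toLinAlgEquiv'_apply] using this
  · rintro ⟨w, hw0, hw⟩
    refine Module.End.hasEigenvalue_of_hasEigenvector
      ⟨Module.End.mem_eigenspace_iff.mpr ?_, hw0⟩
    simpa [Matrix.toLinAlgEquiv'_apply] using hw

end Aux

theorem stmt6 {d : ℕ} (ν : (Fin d → ℂ) → ℝ) (hν : IsNorm ν)
    (A R : Matrix (Fin d) (Fin d) ℂ) (hArank : A.rank = 1)
    (hA : opNormWrt ν A ≤ 1)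
    (Q : Matrix (Fin d) (Fin d) ℂ) (hQ : Q = A * R)
    (hQnorm : opNormWrt ν Q ≤ 1) (hQA : opNormWrt ν (Q * A) = 1) :
    specRad Q = 1 ∧
      ∃ (v : Fin d → ℂ) (lam : ℂ), v ≠ 0 ∧ ‖lam‖ = 1 ∧ Q.mulVec v = lam • v := by
  rw [Matrix.rank] at hArank
  obtain ⟨x, hx0, hspan⟩ := finrank_eq_one_iff'.mp hArank
  set x0 : Fin d → ℂ := (x : Fin d → ℂ) with hx0def
  have hx0' : x0 ≠ 0 := fun h => hx0 (Subtype.ext h)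
  have hcol : ∀ v : Fin d → ℂ, ∃ α : ℂ, A.mulVec v = α • x0 := by
    intro v
    obtain ⟨c, hc⟩ := hspan ⟨A.mulVec v, ⟨v, by simp [Matrix.mulVecLin_apply]⟩⟩
    exact ⟨c, by simpa using congrArg (Subtype.val) hc.symm⟩
  obtain ⟨c, hc⟩ := hcol (R.mulVec x0)
  have hQx : Q.mulVec x0 = c • x0 := by
    rw [hQ, ← Matrix.mulVec_mulVec, hc]
  have hQA_act : ∀ v : Fin d → ℂ, (Q * A).mulVec v = c • (A.mulVec v) := by
    intro v
    obtain ⟨α, hα⟩ := hcol v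
    rw [← Matrix.mulVec_mulVec, hα, Matrix.mulVec_smul, hQx, smul_comm]
  have hc_ge : 1 ≤ ‖c‖ := by
    rw [← hQA]
    refine Real.sSup_le ?_ (norm_nonneg c)
    rintro r ⟨v, hv, rfl⟩
    have hv1 : ν v = 1 := hv
    show ν ((Q * A).mulVec v) ≤ ‖c‖
    rw [hQA_act v, hν.smul]
    calc ‖c‖ * ν (A.mulVec v) ≤ ‖c‖ * opNormWrt ν A :=
          mul_le_mul_of_nonneg_left (nu_le_opNorm hν A hv1) (norm_nonneg c)
      _ ≤ ‖c‖ * 1 := mul_le_mul_of_nonneg_left hA (norm_nonneg c)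
      _ = ‖c‖ := mul_one _
  have hc_le : ‖c‖ ≤ 1 := eig_abs_le hν hQnorm hx0' hQx
  have hc1 : ‖c‖ = 1 := le_antisymm hc_le hc_ge
  have hc_spec : c ∈ spectrum ℂ Q := mem_spectrum_iff_eig.mpr ⟨x0, hx0', hQx⟩
  refine ⟨?_, x0, c, hx0', hc1, hQx⟩
  unfold specRad
  have hball : ∀ r ∈ (fun z : ℂ => ‖z‖) '' spectrum ℂ Q, r ≤ 1 := by
    rintro r ⟨μ, hμ, rfl⟩
    obtain ⟨w, hw0, hw⟩ := mem_spectrum_iff_eig.mp hμ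
    exact eig_abs_le hν hQnorm hw0 hw
  refine le_antisymm (Real.sSup_le hball zero_le_one) ?_
  have : (1 : ℝ) ∈ (fun z : ℂ => ‖z‖) '' spectrum ℂ Q := ⟨c, hc_spec, hc1⟩
  exact le_csSup ⟨1, fun r hr => hball r hr⟩ this
end
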